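/- Homogeneity degrees of parameter gradients (from the proof of Theorem 5.1): Let d = 1, let A ∈ ℝ^{n×n} be diagonal with negative diagonal entries, B ∈ ℝ^{n×1}, C ∈ ℝ^{1×n}, b ∈ ℝ, and set the S6 selection weight w = 0. Then, as functions of the input u ∈ ℝ^L: (i) Γ_S4D(u)_L is homogeneous of degree 1, and so is its partial derivative ∂Γ_S4D(u)_L/∂b; (ii) Γ_S6(u)_L is homogeneous of degree 3; (iii) the partial derivative ∂Γ_S6(u)_L/∂w evaluated at w = 0 is homogeneous of degree 4; and (iv) the partial derivative ∂Γ_S6(u)_L/∂b at w = 0 is homogeneous of degree 3. (A function f is homogeneous of degree m if f(cu) = c^m f(u) for all c > 0.) -/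

import Mathlib

open Matrix Filter Asymptotics MeasureTheory Real Topology

noncomputable section

/-- Matrix exponential over the reals. -/
def mexp {n : ℕ} (A : Matrix (Fin n) (Fin n) ℝ) : Matrix (Fin n) (Fin n) ℝ :=
  NormedSpace.exp A

/-- The softplus function `z ↦ log (1 + e^z)`. -/
def softplus (z : ℝ) : ℝ := Real.log (1 + Real.exp z)

/-- Time-varying linear state recursion: `x 0 = 0`,
`x (k+1) = Abar k *ᵥ x k + u k • Bbar k`.  (Index `k : ℕ` is the 0-based
position of the input, so `x (k+1)` is the state `x_{k+1}` after seeing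
inputs `u_1 = u 0, …, u_{k+1} = u k`.) -/
def tvState {n : ℕ} (Abar : ℕ → Matrix (Fin n) (Fin n) ℝ) (Bbar : ℕ → Fin n → ℝ)
    (u : ℕ → ℝ) : ℕ → Fin n → ℝ
  | 0 => 0
  | k + 1 => (Abar k) *ᵥ (tvState Abar Bbar u k) + u k • Bbar k

/-- Zero-padded extension of a finite scalar sequence `(u_1, …, u_L)`
(`u 0` is `u_1`, …, `u ⟨L-1⟩` is `u_L`). -/
def seq {L : ℕ} (u : Fin L → ℝ) : ℕ → ℝ := fun k => if h : k < L then u ⟨k, h⟩ else 0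

/-- Zero-padded extension of a finite vector-valued sequence. -/
def seqd {L d : ℕ} (u : Fin L → Fin d → ℝ) : ℕ → Fin d → ℝ :=
  fun k => if h : k < L then u ⟨k, h⟩ else 0

/-- Final output `Γ_S4D(u)_L` of a single-channel (`d = 1`) S4D unit:
`Ā = exp(exp(b) A)`, `B̄ = A⁻¹(Ā − I)B`, `x_k = Ā x_{k-1} + B̄ u_k`, `x_0 = 0`,
`y_k = C x_k`. -/
def s4dScalar {n : ℕ} (A : Matrix (Fin n) (Fin n) ℝ) (B C : Fin n → ℝ) (b : ℝ)
    (L : ℕ) (u : ℕ → ℝ) : ℝ :=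
  C ⬝ᵥ tvState (fun _ => mexp (Real.exp b • A))
      (fun _ => A⁻¹ *ᵥ ((mexp (Real.exp b • A) - 1) *ᵥ B)) u L

/-- Final output `Γ_S6(u)_L` of a single-channel (`d = 1`) S6 unit:
`Δ_k = softplus(w u_k + b)`, `Ā_k = exp(Δ_k A)`, `B̄_k = A⁻¹(Ā_k − I)B u_k`,
`x_k = Ā_k x_{k-1} + B̄_k u_k`, `x_0 = 0`, `y_k = (u_k C) x_k`. -/
def s6Scalar {n : ℕ} (A : Matrix (Fin n) (Fin n) ℝ) (B C : Fin n → ℝ) (w b : ℝ)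
    (L : ℕ) (u : ℕ → ℝ) : ℝ :=
  u (L - 1) *
    (C ⬝ᵥ tvState (fun k => mexp (softplus (w * u k + b) • A))
        (fun k => u k • (A⁻¹ *ᵥ ((mexp (softplus (w * u k + b) • A) - 1) *ᵥ B))) u L)


/-! ### Auxiliary lemmas -/

private lemma seq_smul' {L : ℕ} (c : ℝ) (u : Fin L → ℝ) :
    _root_.seq (c • u) = fun k => c * _root_.seq u k := by
  funext k
  simp only [_root_.seq]
  split <;> simp

private lemma tv_smul' {n : ℕ} (M : ℕ → Matrix (Fin n) (Fin n) ℝ) (G : ℕ → Fin n → ℝ)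
    (u : ℕ → ℝ) (c : ℝ) :
    ∀ m, tvState M G (fun k => c * u k) m = c • tvState M G u m := by
  intro m
  induction m with
  | zero => simp [tvState]
  | succ k ih =>
      simp only [tvState, ih, Matrix.mulVec_smul, smul_add, mul_smul]

private lemma tv_sq' {n : ℕ} (M : ℕ → Matrix (Fin n) (Fin n) ℝ) (G : ℕ → Fin n → ℝ)
    (u : ℕ → ℝ) (c : ℝ) :
    ∀ m, tvState M (fun k => (c * u k) • G k) (fun k => c * u k) m
      = (c * c) • tvState M (fun k => u k • G k) u m := by
  intro m
  induction m with
  | zero => simp [tvState]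
  | succ k ih =>
      simp only [tvState, ih, Matrix.mulVec_smul, smul_add]
      congr 1
      simp only [smul_smul]
      congr 1
      ring

/-- Degree-1 homogeneity of the S4D output, for every value of `b`. -/
private lemma s4d_hom {n : ℕ} (A : Matrix (Fin n) (Fin n) ℝ) (B C : Fin n → ℝ)
    (b : ℝ) (L : ℕ) (c : ℝ) (v : ℕ → ℝ) :
    s4dScalar A B C b L (fun k => c * v k) = c * s4dScalar A B C b L v := by
  simp only [s4dScalar, tv_smul', dotProduct_smul, smul_eq_mul]

/-- Scaling identity for the S6 output: scaling the input by `c` is the same as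
scaling the selection weight `w` by `c` and multiplying the output by `c ^ 3`. -/
private lemma s6_hom {n : ℕ} (A : Matrix (Fin n) (Fin n) ℝ) (B C : Fin n → ℝ)
    (w b : ℝ) (L : ℕ) (c : ℝ) (v : ℕ → ℝ) :
    s6Scalar A B C w b L (fun k => c * v k) = c ^ 3 * s6Scalar A B C (c * w) b L v := by
  have harg : ∀ k : ℕ, w * (c * v k) + b = (c * w) * v k + b := fun k => by ring
  simp only [s6Scalar, harg]
  rw [tv_sq']
  rw [dotProduct_smul]
  simp only [smul_eq_mul]
  ring

/-- Unconditional chain rule for precomposition with multiplication by a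
nonzero constant, at the point `0`. -/
private lemma deriv_comp_mul (g : ℝ → ℝ) (c : ℝ) (hc : c ≠ 0) :
    deriv (fun w => g (c * w)) 0 = c * deriv g 0 := by
  by_cases h : DifferentiableAt ℝ g 0
  · have h0 : HasDerivAt (fun w : ℝ => c * w) c 0 := by
      simpa using (hasDerivAt_id (0 : ℝ)).const_mul c
    have hg : HasDerivAt g (deriv g 0) (c * 0) := by
      simpa using h.hasDerivAt
    have hcomp := hg.comp 0 h0
    simp only [Function.comp_def] at hcomp
    rw [hcomp.deriv]; ring
  · have h' : ¬ DifferentiableAt ℝ (fun w => g (c * w)) 0 := by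
      intro hd
      apply h
      have key : g = fun w => (fun w' => g (c * w')) (c⁻¹ * w) := by
        funext w
        congr 1
        field_simp
      rw [key]
      have h1 : DifferentiableAt ℝ (fun w : ℝ => c⁻¹ * w) 0 :=
        (differentiable_id.const_mul c⁻¹).differentiableAt
      have h2 : DifferentiableAt ℝ (fun w' => g (c * w')) (c⁻¹ * 0) := by
        simpa using hd
      exact h2.comp 0 h1
    rw [deriv_zero_of_not_differentiableAt h, deriv_zero_of_not_differentiableAt h',
      mul_zero]

/-- **Homogeneity degrees of parameter gradients** (from the proof of
Theorem 5.1).  Let `d = 1`, `A` diagonal with negative diagonal entries, and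
`w = 0`.  As functions of the input `u`: (i) `Γ_S4D(u)_L` and `∂Γ_S4D(u)_L/∂b`
are homogeneous of degree 1; (ii) `Γ_S6(u)_L` is homogeneous of degree 3;
(iii) `∂Γ_S6(u)_L/∂w` at `w = 0` is homogeneous of degree 4; and
(iv) `∂Γ_S6(u)_L/∂b` at `w = 0` is homogeneous of degree 3. -/
theorem s6_s4d_gradient_homogeneity
    (n L : ℕ) (hn : 1 ≤ n) (hL : 1 ≤ L)
    (A : Matrix (Fin n) (Fin n) ℝ)
    (hAdiag : ∀ i j : Fin n, i ≠ j → A i j = 0) (hAneg : ∀ i : Fin n, A i i < 0)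
    (B C : Fin n → ℝ) (b : ℝ) :
    (∀ c : ℝ, 0 < c → ∀ u : Fin L → ℝ,
        s4dScalar A B C b L (seq (c • u)) = c ^ 1 * s4dScalar A B C b L (seq u)) ∧
    (∀ c : ℝ, 0 < c → ∀ u : Fin L → ℝ,
        deriv (fun b' => s4dScalar A B C b' L (seq (c • u))) b =
          c ^ 1 * deriv (fun b' => s4dScalar A B C b' L (seq u)) b) ∧
    (∀ c : ℝ, 0 < c → ∀ u : Fin L → ℝ,
        s6Scalar A B C 0 b L (seq (c • u)) = c ^ 3 * s6Scalar A B C 0 b L (seq u)) ∧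
    (∀ c : ℝ, 0 < c → ∀ u : Fin L → ℝ,
        deriv (fun w => s6Scalar A B C w b L (seq (c • u))) 0 =
          c ^ 4 * deriv (fun w => s6Scalar A B C w b L (seq u)) 0) ∧
    (∀ c : ℝ, 0 < c → ∀ u : Fin L → ℝ,
        deriv (fun b' => s6Scalar A B C 0 b' L (seq (c • u))) b =
          c ^ 3 * deriv (fun b' => s6Scalar A B C 0 b' L (seq u)) b) := by
  have hs4 : ∀ (b' c : ℝ) (u : Fin L → ℝ),
      s4dScalar A B C b' L (seq (c • u)) = c * s4dScalar A B C b' L (seq u) := by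
    intro b' c u
    rw [seq_smul', s4d_hom]
  have hs6 : ∀ (w' b' c : ℝ) (u : Fin L → ℝ),
      s6Scalar A B C w' b' L (seq (c • u)) = c ^ 3 * s6Scalar A B C (c * w') b' L (seq u) := by
    intro w' b' c u
    rw [seq_smul', s6_hom]
  refine ⟨?_, ?_, ?_, ?_, ?_⟩
  · intro c hc u
    rw [pow_one, hs4]
  · intro c hc u
    have : (fun b' => s4dScalar A B C b' L (seq (c • u)))
        = fun b' => c * s4dScalar A B C b' L (seq u) := funext fun b' => hs4 b' c u
    rw [this, pow_one, deriv_const_mul_field]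
  · intro c hc u
    simpa using hs6 0 b c u
  · intro c hc u
    have : (fun w => s6Scalar A B C w b L (seq (c • u)))
        = fun w => c ^ 3 * ((fun w' => s6Scalar A B C w' b L (seq u)) (c * w)) :=
      funext fun w => hs6 w b c u
    rw [this, deriv_const_mul_field, deriv_comp_mul (fun w' => s6Scalar A B C w' b L (_root_.seq u)) c hc.ne']
    ring
  · intro c hc u
    have : (fun b' => s6Scalar A B C 0 b' L (seq (c • u)))
        = fun b' => c ^ 3 * s6Scalar A B C 0 b' L (seq u) := by
      funext b'
      simpa using hs6 0 b' c u
    rw [this, deriv_const_mul_field]
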